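/- (Equilibria of the closed loop achieve zero frequency deviation and economic optimality) Let n ≥ 1, let G and G^{com} be CONNECTED simple graphs on {1,…,n} with neighbor sets N_i and N_i^{com} respectively, and write (Lx)_i = Σ_{j∈N_i^{com}}(x_i − x_j) for the Laplacian of G^{com}. Suppose B_{ij} = B_{ji} for i,j adjacent in G, K_{pi} > 0, Q_i > 0, R_i ∈ ℝ, M_{1i} > 0, M_{2i} ≥ 0, M_{3i} > 0 and M_{4i} = −(M_{2i}+M_{3i}) for all i. Let δ, V, f, P, θ, P_d ∈ ℝ^n be constants satisfying: (i) f_i = f_j for every edge {i,j} of G; (ii) 0 = −f_i + K_{pi}(P_i − P_{di} + Σ_{j∈N_i} V_i V_j B_{ij} sin(δ_i − δ_j)) for all i; (iii) 0 = −(M_{2i}+M_{3i})P_i − M_{4i}θ_i − M_{1i}f_i for all i; (iv) 0 = −θ_i + P_i − (M_{1i}Q_i/(M_{2i}+M_{3i}))·(L(Qθ+R))_i for all i, where Qθ+R has entries Q_jθ_j + R_j. Then f = 0, P = θ, and P_i = (λ̄ − R_i)/Q_i for every i with λ̄ = (Σ_{j=1}^n (P_{dj} + R_j/Q_j))/(Σ_{j=1}^n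 1/Q_j); in particular the marginal costs Q_iP_i + R_i are identical for all i and P is the optimal generation solving the economic dispatch problem. -/

import Mathlib

open Finset

private lemma swap_sum {n : ℕ} (G : SimpleGraph (Fin n)) [DecidableRel G.Adj]
    (F : Fin n → Fin n → ℝ) :
    ∑ i, ∑ j ∈ G.neighborFinset i, F i j = ∑ i, ∑ j ∈ G.neighborFinset i, F j i := by
  rw [Finset.sum_comm' (s' := fun j => G.neighborFinset j) (t' := Finset.univ)]
  intro i j
  simp [SimpleGraph.mem_neighborFinset, G.adj_comm]

private lemma antisym_sum_zero {n : ℕ} (G : SimpleGraph (Fin n)) [DecidableRel G.Adj]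
    (F : Fin n → Fin n → ℝ) (h : ∀ i j, G.Adj i j → F j i = -F i j) :
    ∑ i, ∑ j ∈ G.neighborFinset i, F i j = 0 := by
  have hs := swap_sum G F
  have h2 : ∑ i, ∑ j ∈ G.neighborFinset i, F j i
      = -∑ i, ∑ j ∈ G.neighborFinset i, F i j := by
    rw [← Finset.sum_neg_distrib]
    refine Finset.sum_congr rfl fun i _ => ?_
    rw [← Finset.sum_neg_distrib]
    refine Finset.sum_congr rfl fun j hj => ?_
    exact h i j (by simpa [SimpleGraph.mem_neighborFinset] using hj)
  linarith [hs, h2]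

private lemma const_of_adj {n : ℕ} {G : SimpleGraph (Fin n)} (hG : G.Connected)
    (g : Fin n → ℝ) (h : ∀ i j, G.Adj i j → g i = g j) : ∀ i j, g i = g j := by
  intro i j
  obtain ⟨w⟩ := hG i j
  induction w with
  | nil => rfl
  | cons ha _ ih => exact (h _ _ ha).trans ih

/-- Equilibria of the closed loop achieve zero frequency deviation and economic
optimality: at any equilibrium of the power network (on the connected physical graph `G`)
interconnected with the reduced turbine dynamics and the distributed consensus controller
(on the connected communication graph `Gc`), the frequency deviation is zero, `P = θ`, and
the generation is the optimal one: `P i = (λ̄ - R i)/Q i` with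
`λ̄ = (∑ j, (Pd j + R j / Q j)) / (∑ j, 1 / Q j)`; in particular the marginal costs
`Q i * P i + R i` are identical for all areas. -/
theorem stmt9 (n : ℕ) (hn : 1 ≤ n)
    (G Gc : SimpleGraph (Fin n)) [DecidableRel G.Adj] [DecidableRel Gc.Adj]
    (hG : G.Connected) (hGc : Gc.Connected)
    (B : Fin n → Fin n → ℝ) (hBsym : ∀ i j, G.Adj i j → B i j = B j i)
    (Kp Q R M1 M2 M3 M4 : Fin n → ℝ)
    (hKp : ∀ i, 0 < Kp i) (hQ : ∀ i, 0 < Q i) (hM1 : ∀ i, 0 < M1 i)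
    (hM2 : ∀ i, 0 ≤ M2 i) (hM3 : ∀ i, 0 < M3 i) (hM4 : ∀ i, M4 i = -(M2 i + M3 i))
    (δ V f P θ Pd : Fin n → ℝ)
    (h1 : ∀ i j, G.Adj i j → f i = f j)
    (h2 : ∀ i, 0 = -f i + Kp i * (P i - Pd i +
      ∑ j ∈ G.neighborFinset i, V i * V j * B i j * Real.sin (δ i - δ j)))
    (h3 : ∀ i, 0 = -(M2 i + M3 i) * P i - M4 i * θ i - M1 i * f i)
    (h4 : ∀ i, 0 = -θ i + P i - (M1 i * Q i / (M2 i + M3 i)) *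
      ∑ j ∈ Gc.neighborFinset i, ((Q i * θ i + R i) - (Q j * θ j + R j))) :
    (∀ i, f i = 0) ∧ (∀ i, P i = θ i) ∧
    (∀ i, P i = ((∑ j, (Pd j + R j / Q j)) / (∑ j, 1 / Q j) - R i) / Q i) ∧
    (∀ i j, Q i * P i + R i = Q j * P j + R j) := by
  haveI : NeZero n := ⟨by omega⟩
  set μ : Fin n → ℝ := fun i => Q i * θ i + R i with hμ
  set Lap : Fin n → ℝ := fun i => ∑ j ∈ Gc.neighborFinset i, (μ i - μ j) with hLap
  have hM23 : ∀ i, 0 < M2 i + M3 i := fun i => by linarith [hM2 i, hM3 i]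
  -- From (iii): (M2+M3)(P-θ) = -(M1 f)
  have hPθ : ∀ i, (M2 i + M3 i) * (P i - θ i) = -(M1 i * f i) := by
    intro i
    have h3' := h3 i
    rw [hM4 i] at h3'
    ring_nf at h3' ⊢
    linarith
  -- From (iv): Q i * Lap i = -f i
  have hQL : ∀ i, Q i * Lap i = -f i := by
    intro i
    have h4' := h4 i
    have e2 : P i - θ i = (M1 i * Q i / (M2 i + M3 i)) * Lap i := by
      simp only [hLap, hμ]; linarith
    have e1 := hPθ i
    rw [e2] at e1
    have hne : (M2 i + M3 i) ≠ 0 := ne_of_gt (hM23 i)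
    have e3 : M1 i * (Q i * Lap i) = M1 i * (-f i) := by
      field_simp at e1
      nlinarith [e1]
    exact mul_left_cancel₀ (ne_of_gt (hM1 i)) e3
  -- sum of Laplacian is zero
  have hsumLap : ∑ i, Lap i = 0 := by
    simpa [hLap] using
      antisym_sum_zero Gc (fun i j => μ i - μ j) (fun i j _ => by ring)
  -- f is constant on G, hence constant
  have hfc : ∀ i j, f i = f j := const_of_adj hG f h1
  have i0 : Fin n := ⟨0, hn⟩
  have hsumf : ∑ i, f i / Q i = 0 := by
    have : ∀ i, f i / Q i = -Lap i := by
      intro i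
      have h := hQL i
      have hne : Q i ≠ 0 := ne_of_gt (hQ i)
      field_simp
      linarith
    simp only [this, Finset.sum_neg_distrib, hsumLap, neg_zero]
  have hQsum_pos : 0 < ∑ j, 1 / Q j :=
    Finset.sum_pos (fun j _ => one_div_pos.mpr (hQ j)) Finset.univ_nonempty
  have hf0 : ∀ i, f i = 0 := by
    intro i
    have : ∑ j, f j / Q j = f i * ∑ j, 1 / Q j := by
      rw [Finset.mul_sum]
      refine Finset.sum_congr rfl fun j _ => ?_
      rw [hfc j i]
      ring
    rw [hsumf] at this
    rcases mul_eq_zero.mp this.symm with h | h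
    · exact h
    · exact absurd h (ne_of_gt hQsum_pos)
  -- P = θ
  have hPeq : ∀ i, P i = θ i := by
    intro i
    have := hPθ i
    rw [hf0 i] at this
    have hne : (M2 i + M3 i) ≠ 0 := ne_of_gt (hM23 i)
    have : P i - θ i = 0 := by
      rcases mul_eq_zero.mp (by linarith : (M2 i + M3 i) * (P i - θ i) = 0) with h | h
      · exact absurd h hne
      · exact h
    linarith
  -- Lap = 0
  have hLap0 : ∀ i, Lap i = 0 := by
    intro i
    have := hQL i
    rw [hf0 i] at this
    rcases mul_eq_zero.mp (by linarith : Q i * Lap i = 0) with h | h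
    · exact absurd h (ne_of_gt (hQ i))
    · exact h
  -- quadratic form: μ constant on Gc edges
  have hA : ∑ i, ∑ j ∈ Gc.neighborFinset i, μ i * (μ i - μ j) = 0 := by
    have : ∀ i, ∑ j ∈ Gc.neighborFinset i, μ i * (μ i - μ j) = μ i * Lap i := by
      intro i; rw [hLap, Finset.mul_sum]
    simp only [this]
    refine Finset.sum_eq_zero fun i _ => by rw [hLap0 i, mul_zero]
  have hB : ∑ i, ∑ j ∈ Gc.neighborFinset i, μ j * (μ j - μ i) = 0 := by
    rw [swap_sum Gc (fun i j => μ j * (μ j - μ i))]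
    exact hA
  have hq : ∑ i, ∑ j ∈ Gc.neighborFinset i, (μ i - μ j) ^ 2 = 0 := by
    have : ∀ i, ∑ j ∈ Gc.neighborFinset i, (μ i - μ j) ^ 2
        = (∑ j ∈ Gc.neighborFinset i, μ i * (μ i - μ j))
          + ∑ j ∈ Gc.neighborFinset i, μ j * (μ j - μ i) := by
      intro i
      rw [← Finset.sum_add_distrib]
      exact Finset.sum_congr rfl fun j _ => by ring
    simp only [this, Finset.sum_add_distrib, hA, hB, add_zero]
  have hedge : ∀ i j, Gc.Adj i j → μ i = μ j := by
    intro i j hij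
    have h1' := (Finset.sum_eq_zero_iff_of_nonneg
      (fun i _ => Finset.sum_nonneg fun j _ => sq_nonneg _)).mp hq i (Finset.mem_univ i)
    have h2' := (Finset.sum_eq_zero_iff_of_nonneg (fun j _ => sq_nonneg _)).mp h1' j
      (by simpa [SimpleGraph.mem_neighborFinset] using hij)
    have := sq_eq_zero_iff.mp h2'
    linarith
  have hμconst : ∀ i j, μ i = μ j := const_of_adj hGc μ hedge
  -- marginal costs equal
  have hmc : ∀ i j, Q i * P i + R i = Q j * P j + R j := by
    intro i j
    have := hμconst i j
    simp only [hμ] at this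
    rw [hPeq i, hPeq j]
    exact this
  -- economic dispatch: ∑ P = ∑ Pd
  have hbal : ∀ i, P i - Pd i
      + ∑ j ∈ G.neighborFinset i, V i * V j * B i j * Real.sin (δ i - δ j) = 0 := by
    intro i
    have h2' := h2 i
    rw [hf0 i] at h2'
    have := mul_eq_zero.mp (by linarith : Kp i * (P i - Pd i +
      ∑ j ∈ G.neighborFinset i, V i * V j * B i j * Real.sin (δ i - δ j)) = 0)
    rcases this with h | h
    · exact absurd h (ne_of_gt (hKp i))
    · exact h
  have hsin0 : ∑ i, ∑ j ∈ G.neighborFinset i,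
      V i * V j * B i j * Real.sin (δ i - δ j) = 0 := by
    refine antisym_sum_zero G _ fun i j hij => ?_
    rw [hBsym i j hij]
    have : δ j - δ i = -(δ i - δ j) := by ring
    rw [this, Real.sin_neg]
    ring
  have hsumP : ∑ i, P i = ∑ i, Pd i := by
    have : ∑ i, (P i - Pd i
        + ∑ j ∈ G.neighborFinset i, V i * V j * B i j * Real.sin (δ i - δ j)) = 0 :=
      Finset.sum_eq_zero fun i _ => hbal i
    rw [Finset.sum_add_distrib, Finset.sum_sub_distrib, hsin0] at this
    linarith
  -- identify the common marginal cost
  set c : ℝ := Q i0 * P i0 + R i0 with hc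
  have hPi : ∀ i, P i = (c - R i) / Q i := by
    intro i
    have h := hmc i i0
    have hne : Q i ≠ 0 := ne_of_gt (hQ i)
    rw [eq_div_iff hne]
    simp only [hc]
    linarith
  have hcval : c = (∑ j, (Pd j + R j / Q j)) / (∑ j, 1 / Q j) := by
    have e1 : ∑ i, P i = c * (∑ j, 1 / Q j) - ∑ j, R j / Q j := by
      rw [Finset.mul_sum, ← Finset.sum_sub_distrib]
      refine Finset.sum_congr rfl fun i _ => ?_
      rw [hPi i, mul_one_div, sub_div]
    have e2 : ∑ j, (Pd j + R j / Q j) = ∑ j, Pd j + ∑ j, R j / Q j :=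
      Finset.sum_add_distrib
    rw [eq_div_iff (ne_of_gt hQsum_pos), e2]
    rw [hsumP] at e1
    linarith
  refine ⟨hf0, hPeq, fun i => ?_, hmc⟩
  rw [hPi i, hcval]
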